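/- Let d ≥ 2 and let C ⊂ ℝ^d be a strictly convex analytic body with 0 in its interior, with support function P(t) = sup_{x∈C}(t,x). For an invertible linear map L of ℝ^d set f_L(δ) = P(L(1,δ,0,…,0)) and f̃_L(δ) = P(L(−1,−δ,0,…,0)). Then exactly one of the following alternatives holds: (i) there exist an invertible linear map L of ℝ^d and δ, δ′ ∈ ℝ such that f_L″(δ) · f̃_L″(δ′) ≠ f̃_L″(δ) · f_L″(δ′); or (ii) C has a center of symmetry, i.e. there exists v ∈ ℝ^d such that C = 2v − C. -/

import Mathlib

open MeasureTheory Filter Pointwise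
open scoped ENNReal RealInnerProductSpace Real

noncomputable section

abbrev Torus (d : ℕ) := Fin d → AddCircle (1 : ℝ)

def torusProj {d : ℕ} (v : EuclideanSpace ℝ (Fin d)) : Torus d :=
  fun i => (v i : AddCircle (1 : ℝ))

def suppFn {d : ℕ} (C : Set (EuclideanSpace ℝ (Fin d))) (t : EuclideanSpace ℝ (Fin d)) : ℝ :=
  sSup ((fun x => (inner ℝ t x : ℝ)) '' C)

structure StrictlyConvexAnalyticBody (d : ℕ) where
  carrier : Set (EuclideanSpace ℝ (Fin d))
  isCompact : IsCompact carrier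
  convex : Convex ℝ carrier
  nonemptyInterior : (interior carrier).Nonempty
  strictConvex : StrictConvex ℝ carrier
  analyticSupport : AnalyticOnNhd ℝ (suppFn carrier) {(0 : EuclideanSpace ℝ (Fin d))}ᶜ
  posCurvature : ∀ t w : EuclideanSpace ℝ (Fin d), t ≠ 0 → w ≠ 0 → (inner ℝ t w : ℝ) = 0 →
    0 < iteratedDeriv 2 (fun s : ℝ => suppFn carrier (t + s • w)) 0

def discrepancy (d : ℕ) (C : Set (EuclideanSpace ℝ (Fin d))) (r : ℝ)
    (α x : Torus d) (N : ℕ) : ℝ :=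
  (∑ n ∈ Finset.range N,
    Set.indicator (torusProj '' (r • C)) (fun _ => (1:ℝ)) (x + n • α))
    - N * (volume (r • C)).toReal

def lamMeasure (d : ℕ) (a b : ℝ) : Measure (ℝ × Torus d × Torus d) :=
  ((volume (Set.Icc a b))⁻¹ • volume.restrict (Set.Icc a b)).prod
    ((volume : Measure (Torus d)).prod (volume : Measure (Torus d)))


/-- The vector `(u, v, 0, …, 0)` of `ℝ^d`. -/
def pairVec (d : ℕ) (u v : ℝ) : EuclideanSpace ℝ (Fin d) :=
  (EuclideanSpace.equiv (Fin d) ℝ).symm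
    (fun i => if (i : ℕ) = 0 then u else if (i : ℕ) = 1 then v else 0)

/-- `f_L(δ) = P(L(1,δ,0,…,0))`. -/
def fL (d : ℕ) (C : Set (EuclideanSpace ℝ (Fin d)))
    (L : EuclideanSpace ℝ (Fin d) ≃ₗ[ℝ] EuclideanSpace ℝ (Fin d)) (δ : ℝ) : ℝ :=
  suppFn C (L (pairVec d 1 δ))

/-- `f̃_L(δ) = P(L(-1,-δ,0,…,0))`. -/
def fLtilde (d : ℕ) (C : Set (EuclideanSpace ℝ (Fin d)))
    (L : EuclideanSpace ℝ (Fin d) ≃ₗ[ℝ] EuclideanSpace ℝ (Fin d)) (δ : ℝ) : ℝ :=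
  suppFn C (L (-pairVec d 1 δ))


-- ===== auxiliary material =====
open Filter Set



lemma iterDeriv2 (f : ℝ → ℝ) : iteratedDeriv 2 f = deriv (deriv f) := by
  have : (2:ℕ) = 1 + 1 := rfl
  rw [this, iteratedDeriv_succ, iteratedDeriv_one]

lemma iterDeriv2_shift (F : ℝ → ℝ) (δ : ℝ) :
    iteratedDeriv 2 (fun s => F (δ + s)) 0 = iteratedDeriv 2 F δ := by
  rw [iterDeriv2, iterDeriv2]
  have h1 : deriv (fun s => F (δ + s)) = fun s => deriv F (δ + s) := by
    funext s; exact deriv_comp_const_add F δ s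
  rw [h1]
  have h2 : deriv (fun s => deriv F (δ + s)) 0 = deriv (deriv F) (δ + 0) :=
    deriv_comp_const_add (deriv F) δ 0
  rw [h2, add_zero]

lemma iterDeriv2_neg (F : ℝ → ℝ) :
    iteratedDeriv 2 (fun s => F (-s)) 0 = iteratedDeriv 2 F 0 := by
  rw [iterDeriv2, iterDeriv2]
  have h1 : deriv (fun s => F (-s)) = fun s => -deriv F (-s) := by
    funext s; exact deriv_comp_neg F s
  rw [h1]
  have h2 : deriv (fun s => -(deriv F (-s))) 0 = -deriv (fun s => deriv F (-s)) 0 := deriv.neg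
  rw [h2, deriv_comp_neg (deriv F) 0]
  simp

lemma analytic_diff {F : ℝ → ℝ} (hF : AnalyticOnNhd ℝ F univ) : Differentiable ℝ F :=
  fun x => (hF x trivial).differentiableAt

lemma deriv_analytic {F : ℝ → ℝ} (hF : AnalyticOnNhd ℝ F univ) :
    AnalyticOnNhd ℝ (deriv F) univ := hF.deriv

lemma iterDeriv2_sub_const_mul {F G : ℝ → ℝ} (hF : AnalyticOnNhd ℝ F univ)
    (hG : AnalyticOnNhd ℝ G univ) (c : ℝ) (δ : ℝ) :
    iteratedDeriv 2 (fun x => F x - c * G x) δ =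
      iteratedDeriv 2 F δ - c * iteratedDeriv 2 G δ := by
  rw [iterDeriv2, iterDeriv2, iterDeriv2]
  have h1 : deriv (fun x => F x - c * G x) = fun x => deriv F x - c * deriv G x := by
    funext x
    exact (((analytic_diff hF x).hasDerivAt).sub
      (((analytic_diff hG x).hasDerivAt).const_mul c)).deriv
  rw [h1]
  exact (((analytic_diff (deriv_analytic hF) δ).hasDerivAt).sub
      (((analytic_diff (deriv_analytic hG) δ).hasDerivAt).const_mul c)).deriv

lemma affine_of_second_deriv_zero {F : ℝ → ℝ} (hF : AnalyticOnNhd ℝ F univ)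
    (h2 : ∀ δ, iteratedDeriv 2 F δ = 0) :
    ∀ δ, F δ = deriv F 0 * δ + F 0 := by
  have hd : Differentiable ℝ F := analytic_diff hF
  have hd' : Differentiable ℝ (deriv F) := analytic_diff (deriv_analytic hF)
  have hc : ∀ δ, deriv F δ = deriv F 0 := by
    intro δ
    refine is_const_of_deriv_eq_zero hd' ?_ δ 0
    intro x; have := h2 x; rwa [iterDeriv2] at this
  intro δ
  have hH : ∀ x, HasDerivAt (fun y => F y - (deriv F 0 * y + F 0)) 0 x := by
    intro x
    have := (hd x).hasDerivAt.sub
      (((hasDerivAt_id x).const_mul (deriv F 0)).add_const (F 0))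
    rw [hc x, mul_one, sub_self] at this; exact this
  have := is_const_of_deriv_eq_zero (fun x => (hH x).differentiableAt)
    (fun x => (hH x).deriv) δ 0
  simp at this
  linarith [this]

lemma iterDeriv2_add_affine {F : ℝ → ℝ} (hF : AnalyticOnNhd ℝ F univ) (α β δ : ℝ) :
    iteratedDeriv 2 (fun x => F x + (α * x + β)) δ = iteratedDeriv 2 F δ := by
  rw [iterDeriv2, iterDeriv2]
  have h1 : deriv (fun x => F x + (α * x + β)) = fun x => deriv F x + α := by
    funext x
    have := ((analytic_diff hF x).hasDerivAt.add
      (((hasDerivAt_id x).const_mul α).add_const β)).deriv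
    rw [mul_one] at this; exact this
  rw [h1]
  exact congrFun (deriv_add_const' α) δ





variable {d : ℕ} {K : Set (EuclideanSpace ℝ (Fin d))}

lemma suppBdd (hK : IsCompact K) (t : EuclideanSpace ℝ (Fin d)) :
    BddAbove ((fun x => (inner ℝ t x : ℝ)) '' K) :=
  (hK.image (continuous_const.inner continuous_id)).bddAbove

lemma le_suppFn (hK : IsCompact K) {x : EuclideanSpace ℝ (Fin d)} (hx : x ∈ K)
    (t : EuclideanSpace ℝ (Fin d)) : ⟪t, x⟫ ≤ suppFn K t :=
  le_csSup (suppBdd hK t) ⟨x, hx, rfl⟩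

lemma suppFn_le (hne : K.Nonempty) {t : EuclideanSpace ℝ (Fin d)} {u : ℝ}
    (h : ∀ x ∈ K, ⟪t, x⟫ ≤ u) : suppFn K t ≤ u :=
  csSup_le (hne.image _) (by rintro r ⟨x, hx, rfl⟩; exact h x hx)

lemma suppFn_smul (hK : IsCompact K) (hne : K.Nonempty) {μ : ℝ} (hμ : 0 < μ)
    (t : EuclideanSpace ℝ (Fin d)) : suppFn K (μ • t) = μ * suppFn K t := by
  have hmono : Monotone (fun r : ℝ => μ * r) := fun x y h => mul_le_mul_of_nonneg_left h hμ.le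
  have := hmono.map_csSup_of_continuousAt (f := fun r : ℝ => μ * r)
    (continuous_const.mul continuous_id).continuousAt (hne.image _) (suppBdd hK t)
  rw [suppFn, suppFn]
  rw [this]
  congr 1
  rw [← Set.image_comp]
  apply Set.image_congr
  intro x _
  simp [real_inner_smul_left, inner, Finset.mul_sum, mul_assoc]
  exact Finset.sum_congr rfl fun i _ => by ring

lemma mem_iff_suppFn (hK : IsCompact K) (hconv : Convex ℝ K) (hne : K.Nonempty)
    (x : EuclideanSpace ℝ (Fin d)) :
    x ∈ K ↔ ∀ t, ⟪t, x⟫ ≤ suppFn K t := by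
  constructor
  · intro hx t; exact le_suppFn hK hx t
  · intro h
    by_contra hx
    obtain ⟨f, u, hfu, hux⟩ := geometric_hahn_banach_closed_point hconv hK.isClosed hx
    set t := (InnerProductSpace.toDual ℝ (EuclideanSpace ℝ (Fin d))).symm f with ht
    have htf : ∀ y, ⟪t, y⟫ = f y := fun y => InnerProductSpace.toDual_symm_apply
    have h1 : suppFn K t ≤ u := suppFn_le hne (fun y hy => by rw [htf]; exact (hfu y hy).le)
    have := h t
    rw [htf] at this
    linarith

/-- symmetry about v iff support function relation -/
lemma symm_iff_suppFn (hK : IsCompact K) (hconv : Convex ℝ K) (hne : K.Nonempty)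
    (v : EuclideanSpace ℝ (Fin d)) :
    K = (fun x => (2:ℝ) • v - x) '' K ↔
      ∀ t, suppFn K (-t) = suppFn K t - 2 * ⟪t, v⟫ := by
  constructor
  · intro hsym t
    have hle1 : suppFn K (-t) ≤ suppFn K t - 2 * ⟪t, v⟫ := by
      apply suppFn_le hne
      intro x hx
      rw [hsym] at hx
      obtain ⟨y, hy, rfl⟩ := hx
      have := le_suppFn hK hy t
      have e : ⟪-t, (2:ℝ) • v - y⟫ = ⟪t, y⟫ - 2 * ⟪t, v⟫ := by
        rw [inner_neg_left, inner_sub_right, real_inner_smul_right]; try ring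
      rw [e]; linarith
    have hle2 : suppFn K t ≤ suppFn K (-t) + 2 * ⟪t, v⟫ := by
      apply suppFn_le hne
      intro x hx
      rw [hsym] at hx
      obtain ⟨y, hy, rfl⟩ := hx
      have := le_suppFn hK hy (-t)
      have e : ⟪t, (2:ℝ) • v - y⟫ = ⟪-t, y⟫ + 2 * ⟪t, v⟫ := by
        rw [inner_neg_left, inner_sub_right, real_inner_smul_right]; try ring
      rw [e]; linarith
    linarith
  · intro hrel
    ext x
    have hmem := mem_iff_suppFn hK hconv hne
    have hinv : ∀ z, z ∈ (fun x => (2:ℝ) • v - x) '' K ↔ (2:ℝ) • v - z ∈ K := by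
      intro z
      constructor
      · rintro ⟨y, hy, rfl⟩; simpa using hy
      · intro hz; exact ⟨(2:ℝ) • v - z, hz, by simp⟩
    rw [hinv, hmem, hmem]
    constructor
    · intro h t
      have := h (-t)
      rw [hrel] at this
      have e : ⟪t, (2:ℝ) • v - x⟫ = 2 * ⟪t, v⟫ - ⟪t, x⟫ := by
        rw [inner_sub_right, real_inner_smul_right]; try ring
      rw [e]
      rw [inner_neg_left] at this
      linarith
    · intro h t
      have := h (-t)
      have e : ⟪-t, (2:ℝ) • v - x⟫ = ⟪t, x⟫ - 2 * ⟪t, v⟫ := by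
        rw [inner_neg_left, inner_sub_right, real_inner_smul_right]; try ring
      rw [e, hrel] at this
      linarith





abbrev EE (d : ℕ) := EuclideanSpace ℝ (Fin d)

variable {d : ℕ}

lemma pairVec_apply (u v : ℝ) (i : Fin d) :
    pairVec d u v i = if (i : ℕ) = 0 then u else if (i : ℕ) = 1 then v else 0 := rfl

lemma pairVec_decomp (δ : ℝ) :
    pairVec d 1 δ = pairVec d 1 0 + δ • pairVec d 0 1 := by
  ext i
  show (if (i:ℕ) = 0 then (1:ℝ) else if (i:ℕ) = 1 then δ else 0)
    = (if (i:ℕ) = 0 then (1:ℝ) else if (i:ℕ) = 1 then 0 else 0)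
      + δ * (if (i:ℕ) = 0 then (0:ℝ) else if (i:ℕ) = 1 then 1 else 0)
  by_cases h0 : (i:ℕ) = 0 <;> by_cases h1 : (i:ℕ) = 1 <;> simp [h0, h1]

lemma rel_def {a b : EE d} :
    LinearIndependent ℝ ![a, b] ↔ b ≠ 0 ∧ ∀ s : ℝ, s • b ≠ a := by
  rw [linearIndependent_fin2]
  simp

lemma rel_symm {a b : EE d} (h : LinearIndependent ℝ ![a, b]) :
    LinearIndependent ℝ ![b, a] := by
  rw [rel_def] at h ⊢
  obtain ⟨hb, hab⟩ := h
  constructor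
  · intro ha; exact hab 0 (by simp [ha])
  · intro s hba
    rcases eq_or_ne s 0 with rfl | hs
    · rw [zero_smul] at hba; exact hb hba.symm
    · exact hab s⁻¹ (by rw [← hba, smul_smul, inv_mul_cancel₀ hs, one_smul])

lemma rel_negl {a b : EE d} (h : LinearIndependent ℝ ![a, b]) :
    LinearIndependent ℝ ![-a, b] := by
  rw [rel_def] at h ⊢
  exact ⟨h.1, fun s hs => h.2 (-s) (by rw [neg_smul, hs, neg_neg])⟩

lemma rel_negr {a b : EE d} (h : LinearIndependent ℝ ![a, b]) :
    LinearIndependent ℝ ![a, -b] := by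
  rw [rel_def] at h ⊢
  refine ⟨neg_ne_zero.2 h.1, fun s hs => h.2 (-s) (by rwa [smul_neg, ← neg_smul] at hs)⟩

lemma rel_shift {a b : EE d} (h : LinearIndependent ℝ ![a, b]) (δ : ℝ) :
    LinearIndependent ℝ ![a + δ • b, b] := by
  rw [rel_def] at h ⊢
  refine ⟨h.1, fun s hs => h.2 (s - δ) ?_⟩
  rw [sub_smul, hs]; abel

lemma rel_ne_zero {a b : EE d} (h : LinearIndependent ℝ ![a, b]) (δ : ℝ) :
    a + δ • b ≠ 0 := by
  rw [rel_def] at h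
  intro hz
  refine h.2 (-δ) ?_
  rw [neg_smul, neg_eq_iff_add_eq_zero]
  rw [← hz]; abel

lemma rel_map {a b : EE d} (h : LinearIndependent ℝ ![a, b]) (L : EE d ≃ₗ[ℝ] EE d) :
    LinearIndependent ℝ ![L a, L b] := by
  have := h.map' L.toLinearMap L.ker
  have he : (⇑L.toLinearMap ∘ ![a, b]) = ![L a, L b] := by
    funext i; fin_cases i <;> rfl
  rwa [he] at this

lemma rel_ne {a b : EE d} (h : LinearIndependent ℝ ![a, b]) : a ≠ b := by
  rw [rel_def] at h
  intro hab
  exact h.2 1 (by rw [one_smul, hab])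

section NeedHd
variable (hd : 2 ≤ d)
include hd

lemma rel_e0e1 : LinearIndependent ℝ ![pairVec d 1 0, pairVec d 0 1] := by
  have i0 : Fin d := ⟨0, by omega⟩
  rw [rel_def]
  constructor
  · intro hz
    have h := congrArg (fun v : EE d => v (⟨1, by omega⟩ : Fin d)) hz
    beta_reduce at h
    rw [pairVec_apply] at h
    norm_num at h
  · intro s hs
    have h := congrArg (fun v : EE d => v (⟨0, by omega⟩ : Fin d)) hs
    beta_reduce at h
    have hL : (s • pairVec d 0 1) (⟨0, by omega⟩ : Fin d)
        = s * pairVec d 0 1 (⟨0, by omega⟩ : Fin d) := rfl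
    rw [hL, pairVec_apply, pairVec_apply] at h
    norm_num at h

lemma e0_single :
    pairVec d 1 0 = EuclideanSpace.single (⟨0, by omega⟩ : Fin d) (1:ℝ) := by
  ext j
  rw [pairVec_apply, EuclideanSpace.single_apply]
  by_cases h : (j : ℕ) = 0
  · simp [h, Fin.ext_iff]
  · simp [h, Fin.ext_iff]

lemma e1_single :
    pairVec d 0 1 = EuclideanSpace.single (⟨1, by omega⟩ : Fin d) (1:ℝ) := by
  ext j
  rw [pairVec_apply, EuclideanSpace.single_apply]
  by_cases h : (j : ℕ) = 0
  · simp [h, Fin.ext_iff]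
  · by_cases h1 : (j:ℕ) = 1 <;> simp [h, h1, Fin.ext_iff]

lemma exists_L {a b : EE d} (h : LinearIndependent ℝ ![a, b]) :
    ∃ L : EE d ≃ₗ[ℝ] EE d, L (pairVec d 1 0) = a ∧ L (pairVec d 0 1) = b := by
  classical
  have hs : LinearIndepOn ℝ id (Set.range ![a, b]) := h.linearIndepOn_id
  set t : Set (EE d) := hs.extend (Set.subset_univ _) with ht
  let B : Module.Basis t ℝ (EE d) := Module.Basis.extend hs
  haveI : Fintype t := FiniteDimensional.fintypeBasisIndex B
  have hcard : Fintype.card (Fin d) = Fintype.card t := by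
    have h1 : Module.finrank ℝ (EE d) = Fintype.card t := Module.finrank_eq_card_basis B
    rw [finrank_euclideanSpace_fin] at h1
    rw [Fintype.card_fin]; exact h1
  let e : Fin d ≃ t := Fintype.equivOfCardEq hcard
  have hat : a ∈ t := hs.subset_extend _ ⟨0, rfl⟩
  have hbt : b ∈ t := hs.subset_extend _ ⟨1, rfl⟩
  let ta : t := ⟨a, hat⟩
  let tb : t := ⟨b, hbt⟩
  have htab : ta ≠ tb := fun hh => rel_ne h (congrArg Subtype.val hh)
  let i0 : Fin d := ⟨0, by omega⟩
  let i1 : Fin d := ⟨1, by omega⟩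
  have hi01 : i0 ≠ i1 := by simp [i0, i1, Fin.ext_iff]
  let i : Fin d := e.symm ta
  let j : Fin d := e.symm tb
  have hij : i ≠ j := fun hh => htab (by
    have := congrArg e hh; simpa [i, j] using this)
  let σ₁ : Equiv.Perm (Fin d) := Equiv.swap i0 i
  let k : Fin d := σ₁ j
  have hk1 : σ₁ k = j := Equiv.swap_apply_self _ _ _
  have hki0 : k ≠ i0 := by
    intro hh
    apply hij
    have : σ₁ k = σ₁ i0 := by rw [hh]
    rw [hk1, Equiv.swap_apply_left] at this
    exact this.symm
  let σ₂ : Equiv.Perm (Fin d) := Equiv.swap i1 k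
  have hπ0 : σ₁ (σ₂ i0) = i := by
    rw [show σ₂ i0 = i0 from Equiv.swap_apply_of_ne_of_ne hi01 (Ne.symm hki0)]
    exact Equiv.swap_apply_left _ _
  have hπ1 : σ₁ (σ₂ i1) = j := by
    rw [show σ₂ i1 = k from Equiv.swap_apply_left _ _, hk1]
  let g : Fin d ≃ t := (σ₂.trans σ₁).trans e
  have hg0 : g i0 = ta := by
    show e (σ₁ (σ₂ i0)) = ta
    rw [hπ0]; exact e.apply_symm_apply ta
  have hg1 : g i1 = tb := by
    show e (σ₁ (σ₂ i1)) = tb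
    rw [hπ1]; exact e.apply_symm_apply tb
  let Bd : Module.Basis (Fin d) ℝ (EE d) := B.reindex g.symm
  have hBd0 : Bd i0 = a := by
    rw [Module.Basis.reindex_apply, Equiv.symm_symm, hg0]
    exact Module.Basis.extend_apply_self hs ta
  have hBd1 : Bd i1 = b := by
    rw [Module.Basis.reindex_apply, Equiv.symm_symm, hg1]
    exact Module.Basis.extend_apply_self hs tb
  let std : Module.Basis (Fin d) ℝ (EE d) := (EuclideanSpace.basisFun (Fin d) ℝ).toBasis
  have hstd : ∀ m : Fin d, std m = EuclideanSpace.single m 1 := by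
    intro m
    show (EuclideanSpace.basisFun (Fin d) ℝ).toBasis m = _
    rw [OrthonormalBasis.coe_toBasis]
    exact EuclideanSpace.basisFun_apply _ _ _
  refine ⟨std.equiv Bd (Equiv.refl _), ?_, ?_⟩
  · rw [e0_single hd, ← hstd i0]
    rw [Module.Basis.equiv_apply]
    exact hBd0
  · rw [e1_single hd, ← hstd i1]
    rw [Module.Basis.equiv_apply]
    exact hBd1


end NeedHd

-- ===== Part 4: core analytic lemmas =====
section Core

variable {d : ℕ} {K : Set (EuclideanSpace ℝ (Fin d))}

lemma curve_analytic (hPa : AnalyticOnNhd ℝ (suppFn K) {(0 : EE d)}ᶜ)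
    {q r : EE d} (h : ∀ s : ℝ, q + s • r ≠ 0) :
    AnalyticOnNhd ℝ (fun s : ℝ => suppFn K (q + s • r)) Set.univ := by
  intro s _
  have hcur : AnalyticAt ℝ (fun x : ℝ => q + x • r) s :=
    analyticAt_const.add (analyticAt_id.smul analyticAt_const)
  have hc := AnalyticAt.comp (f := fun x : ℝ => q + x • r) (x := s) (hPa _ (h s)) hcur
  exact hc

lemma d2_pos (hKc : IsCompact K) (hne : K.Nonempty)
    (hPa : AnalyticOnNhd ℝ (suppFn K) {(0 : EE d)}ᶜ)
    (hcurv : ∀ t w : EE d, t ≠ 0 → w ≠ 0 → (inner ℝ t w : ℝ) = 0 →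
      0 < iteratedDeriv 2 (fun s : ℝ => suppFn K (t + s • w)) 0)
    {a b : EE d} (h : LinearIndependent ℝ ![a, b]) :
    0 < iteratedDeriv 2 (fun δ : ℝ => suppFn K (a + δ • b)) 0 := by
  have ha : a ≠ 0 := by have := rel_ne_zero h 0; simpa using this
  set lam : ℝ := (inner ℝ a b : ℝ) / ‖a‖ ^ 2 with hlam
  have hna : ‖a‖ ≠ 0 := by simpa using ha
  set w : EuclideanSpace ℝ (Fin d) := b - lam • a with hwdef
  have hb : b = w + lam • a := by rw [hwdef]; abel
  have hw : w ≠ 0 := by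
    intro h0
    have hba : lam • a = b := by
      have := hb; rw [h0, zero_add] at this; exact this.symm
    exact (rel_def.1 (rel_symm h)).2 lam hba
  have horth : (inner ℝ a w : ℝ) = 0 := by
    rw [hwdef, inner_sub_right, real_inner_smul_right, hlam, real_inner_self_eq_norm_sq a]
    rw [div_mul_cancel₀ _ (pow_ne_zero 2 hna), sub_self]
  set g : ℝ → ℝ := fun s => suppFn K (a + s • w) with hg
  have hgpos := hcurv a w ha hw horth
  have hgan : AnalyticOnNhd ℝ g Set.univ := by
    apply curve_analytic hPa
    intro s hz
    have h2 : (inner ℝ a (a + s • w) : ℝ) = 0 := by rw [hz, inner_zero_right]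
    rw [inner_add_right, real_inner_smul_right, horth, mul_zero, add_zero] at h2
    exact ha (inner_self_eq_zero.1 h2)
  have hgd : Differentiable ℝ g := analytic_diff hgan
  have hgd' : Differentiable ℝ (deriv g) := analytic_diff (deriv_analytic hgan)
  set u : ℝ → ℝ := fun δ => δ / (1 + lam * δ) with hu
  set U : Set ℝ := {δ : ℝ | 0 < 1 + lam * δ} with hUdef
  have hUopen : IsOpen U :=
    isOpen_lt continuous_const (continuous_const.add (continuous_const.mul continuous_id))
  have hU0 : (0:ℝ) ∈ U := by simp [hUdef]
  have heq : ∀ δ ∈ U, suppFn K (a + δ • b) = (1 + lam * δ) * g (u δ) := by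
    intro δ hδ
    have hpos : 0 < 1 + lam * δ := hδ
    have hne0 : (1:ℝ) + lam * δ ≠ 0 := ne_of_gt hpos
    have hne0' : 1 + δ * lam ≠ 0 := by rwa [mul_comm]
    have hv : a + δ • b = (1 + lam * δ) • (a + u δ • w) := by
      simp only [hu]
      rw [hb]
      match_scalars <;> field_simp <;> ring
    rw [hv, suppFn_smul hKc hne hpos]
  set G : ℝ → ℝ := fun δ => lam * g (u δ) + deriv g (u δ) * (1 + lam * δ)⁻¹ with hGdef
  have hlinD : ∀ δ : ℝ, HasDerivAt (fun x : ℝ => 1 + lam * x) lam δ := by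
    intro δ
    simpa using ((hasDerivAt_id δ).const_mul lam).const_add (1:ℝ)
  have huD : ∀ δ ∈ U, HasDerivAt u (((1 + lam * δ)^2)⁻¹) δ := by
    intro δ hδ
    have hne0 : (1:ℝ) + lam * δ ≠ 0 := ne_of_gt hδ
    have h1 := (hasDerivAt_id δ).div (hlinD δ) hne0
    rw [show (1 * (1 + lam * δ) - id δ * lam) / (1 + lam * δ) ^ 2 = ((1 + lam * δ)^2)⁻¹ by
      simp only [id]; ring] at h1
    exact h1
  have hder : ∀ δ ∈ U, deriv (fun x : ℝ => suppFn K (a + x • b)) δ = G δ := by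
    intro δ hδ
    have hne0 : (1:ℝ) + lam * δ ≠ 0 := ne_of_gt hδ
    have hcomp : HasDerivAt (fun x : ℝ => g (u x))
        (deriv g (u δ) * ((1 + lam * δ)^2)⁻¹) δ :=
      ((hgd (u δ)).hasDerivAt).comp δ (huD δ hδ)
    have hF := (hlinD δ).mul hcomp
    have hev : (fun x : ℝ => suppFn K (a + x • b)) =ᶠ[nhds δ]
        (fun x => (1 + lam * x) * g (u x)) :=
      Filter.eventuallyEq_of_mem (hUopen.mem_nhds hδ) heq
    rw [hev.deriv_eq, show deriv (fun x => (1 + lam * x) * g (u x)) δ = _ from hF.deriv, hGdef]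
    field_simp
  rw [iterDeriv2]
  have hev2 : deriv (fun x : ℝ => suppFn K (a + x • b)) =ᶠ[nhds 0] G :=
    Filter.eventuallyEq_of_mem (hUopen.mem_nhds hU0) hder
  rw [hev2.deriv_eq]
  have hu0 : u 0 = 0 := by simp [hu]
  have huD0 : HasDerivAt u 1 0 := by
    have h1 := huD 0 hU0; simpa using h1
  have t1 : HasDerivAt (fun δ : ℝ => lam * g (u δ)) (lam * deriv g 0) 0 := by
    have h2 : HasDerivAt (fun x : ℝ => g (u x)) (deriv g (u 0) * 1) 0 :=
      ((hgd (u 0)).hasDerivAt).comp 0 huD0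
    have h3 := h2.const_mul lam
    simpa [hu0] using h3
  have t2 : HasDerivAt (fun δ : ℝ => deriv g (u δ)) (deriv (deriv g) 0) 0 := by
    have h2 : HasDerivAt (fun x : ℝ => deriv g (u x)) (deriv (deriv g) (u 0) * 1) 0 :=
      ((hgd' (u 0)).hasDerivAt).comp 0 huD0
    simpa [hu0] using h2
  have t3 : HasDerivAt (fun δ : ℝ => (1 + lam * δ)⁻¹) (-lam) 0 := by
    have h2 := (hlinD 0).inv (by norm_num)
    rw [show -lam = -lam / (1 + lam * 0) ^ 2 by simp]; exact h2
  have hGD : HasDerivAt G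
      (lam * deriv g 0 + (deriv (deriv g) 0 * (1 + lam * 0)⁻¹ + deriv g (u 0) * (-lam))) 0 :=
    t1.add (t2.mul t3)
  rw [hGD.deriv]
  rw [iterDeriv2] at hgpos
  have hval : lam * deriv g 0 + (deriv (deriv g) 0 * (1 + lam * 0)⁻¹ + deriv g (u 0) * (-lam))
      = deriv (deriv g) 0 := by
    rw [hu0]; norm_num; ring
  rw [hval]
  exact hgpos

lemma d2_pos_at (hKc : IsCompact K) (hne : K.Nonempty)
    (hPa : AnalyticOnNhd ℝ (suppFn K) {(0 : EE d)}ᶜ)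
    (hcurv : ∀ t w : EE d, t ≠ 0 → w ≠ 0 → (inner ℝ t w : ℝ) = 0 →
      0 < iteratedDeriv 2 (fun s : ℝ => suppFn K (t + s • w)) 0)
    {a b : EE d} (h : LinearIndependent ℝ ![a, b]) (δ : ℝ) :
    0 < iteratedDeriv 2 (fun x : ℝ => suppFn K (a + x • b)) δ := by
  have hfun : (fun s : ℝ => suppFn K ((a + δ • b) + s • b))
      = fun s : ℝ => suppFn K (a + (δ + s) • b) := by
    funext s; congr 1; rw [add_smul]; abel
  have hpos := d2_pos hKc hne hPa hcurv (rel_shift h δ)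
  rw [hfun] at hpos
  rw [← iterDeriv2_shift (fun x : ℝ => suppFn K (a + x • b)) δ]
  exact hpos

end Core

-- ===== Part 5: proportionality relations =====
section Rels

variable {d : ℕ} {K : Set (EuclideanSpace ℝ (Fin d))}

def FullRel (K : Set (EuclideanSpace ℝ (Fin d))) (a b : EE d) (c : ℝ) : Prop :=
  ∃ α β : ℝ, ∀ δ : ℝ, suppFn K (-(a + δ • b)) = c * suppFn K (a + δ • b) + (α * δ + β)

def HalfRel (K : Set (EuclideanSpace ℝ (Fin d))) (a b : EE d) (c : ℝ) : Prop :=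
  ∃ α β : ℝ, ∀ δ : ℝ, 0 < δ →
    suppFn K (-(a + δ • b)) = c * suppFn K (a + δ • b) + (α * δ + β)

lemma full_half {a b : EE d} {c : ℝ} (h : FullRel K a b c) : HalfRel K a b c := by
  obtain ⟨α, β, hr⟩ := h
  exact ⟨α, β, fun δ _ => hr δ⟩

lemma half_unique (hKc : IsCompact K) (hne : K.Nonempty)
    (hPa : AnalyticOnNhd ℝ (suppFn K) {(0 : EE d)}ᶜ)
    (hcurv : ∀ t w : EE d, t ≠ 0 → w ≠ 0 → (inner ℝ t w : ℝ) = 0 →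
      0 < iteratedDeriv 2 (fun s : ℝ => suppFn K (t + s • w)) 0)
    {a b : EE d} (h : LinearIndependent ℝ ![a, b]) {c₁ c₂ : ℝ}
    (h1 : HalfRel K a b c₁) (h2 : HalfRel K a b c₂) : c₁ = c₂ := by
  obtain ⟨α₁, β₁, hr1⟩ := h1
  obtain ⟨α₂, β₂, hr2⟩ := h2
  by_contra hc
  have hcne : c₁ - c₂ ≠ 0 := sub_ne_zero.2 hc
  have haff : ∀ δ ∈ Set.Ioi (0:ℝ), suppFn K (a + δ • b)
      = ((α₂ - α₁) / (c₁ - c₂)) * δ + (β₂ - β₁) / (c₁ - c₂) := by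
    intro δ hδ
    have e1 := hr1 δ hδ
    have e2 := hr2 δ hδ
    rw [div_mul_eq_mul_div, ← add_div, eq_div_iff hcne]
    linarith
  have hev : (fun x : ℝ => suppFn K (a + x • b)) =ᶠ[nhds 1]
      (fun δ : ℝ => ((α₂ - α₁) / (c₁ - c₂)) * δ + (β₂ - β₁) / (c₁ - c₂)) :=
    Filter.eventuallyEq_of_mem (Ioi_mem_nhds one_pos) haff
  have hpos := d2_pos_at hKc hne hPa hcurv h 1
  rw [iterDeriv2] at hpos
  rw [(hev.deriv).deriv_eq] at hpos
  have hda : deriv (fun δ : ℝ => ((α₂ - α₁) / (c₁ - c₂)) * δ + (β₂ - β₁) / (c₁ - c₂))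
      = fun _ : ℝ => (α₂ - α₁) / (c₁ - c₂) := by
    funext x
    have := (((hasDerivAt_id x).const_mul ((α₂ - α₁) / (c₁ - c₂))).add_const
      ((β₂ - β₁) / (c₁ - c₂))).deriv
    simpa using this
  rw [hda, deriv_const] at hpos
  exact lt_irrefl 0 hpos

lemma half_swap (hKc : IsCompact K) (hne : K.Nonempty)
    {a b : EE d} {c : ℝ} (h : HalfRel K a b c) : HalfRel K b a c := by
  obtain ⟨α, β, hr⟩ := h
  refine ⟨β, α, fun δ hδ => ?_⟩
  have hδ0 : δ ≠ 0 := ne_of_gt hδ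
  have hδi : 0 < δ⁻¹ := inv_pos.2 hδ
  have hv : b + δ • a = δ • (a + δ⁻¹ • b) := by
    match_scalars <;> field_simp
  have hv2 : -(b + δ • a) = δ • (-(a + δ⁻¹ • b)) := by rw [hv, smul_neg]
  rw [hv2, hv, suppFn_smul hKc hne hδ, suppFn_smul hKc hne hδ, hr δ⁻¹ hδi]
  field_simp
  ring

lemma full_negdir {a b : EE d} {c : ℝ} (h : FullRel K a b c) : FullRel K a (-b) c := by
  obtain ⟨α, β, hr⟩ := h
  refine ⟨-α, β, fun δ => ?_⟩
  have hv : a + δ • (-b) = a + (-δ) • b := by rw [smul_neg, neg_smul]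
  rw [hv]
  have := hr (-δ)
  linarith

lemma prop_rel (hd : 2 ≤ d) (hKc : IsCompact K) (hne : K.Nonempty)
    (hPa : AnalyticOnNhd ℝ (suppFn K) {(0 : EE d)}ᶜ)
    (hcurv : ∀ t w : EE d, t ≠ 0 → w ≠ 0 → (inner ℝ t w : ℝ) = 0 →
      0 < iteratedDeriv 2 (fun s : ℝ => suppFn K (t + s • w)) 0)
    (hA : ∀ L : EE d ≃ₗ[ℝ] EE d, ∀ δ δ' : ℝ,
      iteratedDeriv 2 (fL d K L) δ * iteratedDeriv 2 (fLtilde d K L) δ' =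
        iteratedDeriv 2 (fLtilde d K L) δ * iteratedDeriv 2 (fL d K L) δ')
    {a b : EE d} (h : LinearIndependent ℝ ![a, b]) :
    ∃ c : ℝ, 0 < c ∧ FullRel K a b c ∧
      c * iteratedDeriv 2 (fun δ : ℝ => suppFn K (a + δ • b)) 0
        = iteratedDeriv 2 (fun δ : ℝ => suppFn K (-(a + δ • b))) 0 := by
  obtain ⟨L, hL0, hL1⟩ := exists_L hd h
  have hLp : ∀ δ : ℝ, L (pairVec d 1 δ) = a + δ • b := fun δ => by
    rw [pairVec_decomp, map_add, LinearEquiv.map_smul, hL0, hL1]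
  have hfL : fL d K L = fun δ : ℝ => suppFn K (a + δ • b) := funext fun δ => by
    simp only [fL]; rw [hLp]
  have hfLt : fLtilde d K L = fun δ : ℝ => suppFn K (-(a + δ • b)) := funext fun δ => by
    simp only [fLtilde]; rw [map_neg, hLp]
  have hψrw : (fun δ : ℝ => suppFn K (-(a + δ • b)))
      = fun δ : ℝ => suppFn K (-a + δ • (-b)) := by
    funext δ; congr 1; rw [smul_neg]; abel
  have hrelnn : LinearIndependent ℝ ![-a, -b] := rel_negr (rel_negl h)
  have hφpos : ∀ δ : ℝ, 0 < iteratedDeriv 2 (fun x : ℝ => suppFn K (a + x • b)) δ :=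
    d2_pos_at hKc hne hPa hcurv h
  have hψpos : ∀ δ : ℝ, 0 < iteratedDeriv 2 (fun x : ℝ => suppFn K (-(a + x • b))) δ := by
    intro δ
    rw [hψrw]
    exact d2_pos_at hKc hne hPa hcurv hrelnn δ
  have hAL := hA L
  rw [hfL, hfLt] at hAL
  set c : ℝ := iteratedDeriv 2 (fun x : ℝ => suppFn K (-(a + x • b))) 0 /
      iteratedDeriv 2 (fun x : ℝ => suppFn K (a + x • b)) 0 with hc
  have hcpos : 0 < c := div_pos (hψpos 0) (hφpos 0)
  have hprop : ∀ δ : ℝ, iteratedDeriv 2 (fun x : ℝ => suppFn K (-(a + x • b))) δ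
      = c * iteratedDeriv 2 (fun x : ℝ => suppFn K (a + x • b)) δ := by
    intro δ
    have h1 := hAL δ 0
    rw [hc, div_mul_eq_mul_div, eq_div_iff (ne_of_gt (hφpos 0))]
    linarith
  have hφan : AnalyticOnNhd ℝ (fun x : ℝ => suppFn K (a + x • b)) Set.univ :=
    curve_analytic hPa (rel_ne_zero h)
  have hψan : AnalyticOnNhd ℝ (fun x : ℝ => suppFn K (-(a + x • b))) Set.univ := by
    rw [hψrw]
    exact curve_analytic hPa (rel_ne_zero hrelnn)
  have hgz : ∀ δ : ℝ, iteratedDeriv 2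
      (fun x : ℝ => suppFn K (-(a + x • b)) - c * suppFn K (a + x • b)) δ = 0 := by
    intro δ
    rw [iterDeriv2_sub_const_mul hψan hφan, hprop δ]
    ring
  have hgan : AnalyticOnNhd ℝ
      (fun x : ℝ => suppFn K (-(a + x • b)) - c * suppFn K (a + x • b)) Set.univ :=
    hψan.sub (analyticOnNhd_const.mul hφan)
  have haf := affine_of_second_deriv_zero hgan hgz
  refine ⟨c, hcpos, ⟨deriv (fun x : ℝ => suppFn K (-(a + x • b)) - c * suppFn K (a + x • b)) 0,
    suppFn K (-(a + (0:ℝ) • b)) - c * suppFn K (a + (0:ℝ) • b), fun δ => ?_⟩, ?_⟩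
  · have h1 : suppFn K (-(a + δ • b)) - c * suppFn K (a + δ • b)
        = deriv (fun x : ℝ => suppFn K (-(a + x • b)) - c * suppFn K (a + x • b)) 0 * δ
          + (suppFn K (-(a + (0:ℝ) • b)) - c * suppFn K (a + (0:ℝ) • b)) := haf δ
    linarith
  · linarith [hprop 0]

end Rels

-- ===== Part 6: the constant is 1; affine difference on lines =====
section One

variable {d : ℕ} {K : Set (EuclideanSpace ℝ (Fin d))}

lemma line_affine (hd : 2 ≤ d) (hKc : IsCompact K) (hne : K.Nonempty)
    (hPa : AnalyticOnNhd ℝ (suppFn K) {(0 : EE d)}ᶜ)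
    (hcurv : ∀ t w : EE d, t ≠ 0 → w ≠ 0 → (inner ℝ t w : ℝ) = 0 →
      0 < iteratedDeriv 2 (fun s : ℝ => suppFn K (t + s • w)) 0)
    (hA : ∀ L : EE d ≃ₗ[ℝ] EE d, ∀ δ δ' : ℝ,
      iteratedDeriv 2 (fL d K L) δ * iteratedDeriv 2 (fLtilde d K L) δ' =
        iteratedDeriv 2 (fLtilde d K L) δ * iteratedDeriv 2 (fL d K L) δ')
    {a b : EE d} (h : LinearIndependent ℝ ![a, b]) :
    ∃ α β : ℝ, ∀ δ : ℝ,
      suppFn K (-(a + δ • b)) = suppFn K (a + δ • b) + (α * δ + β) := by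
  obtain ⟨c1, hp1, hF1, hI1⟩ := prop_rel hd hKc hne hPa hcurv hA h
  obtain ⟨c2, hp2, hF2, hI2⟩ := prop_rel hd hKc hne hPa hcurv hA (rel_symm h)
  obtain ⟨c3, hp3, hF3, hI3⟩ := prop_rel hd hKc hne hPa hcurv hA (rel_negr (rel_symm h))
  obtain ⟨c4, hp4, hF4, hI4⟩ := prop_rel hd hKc hne hPa hcurv hA (rel_negl h)
  -- c2 = c1 by the swap argument
  have e21 : c2 = c1 := half_unique hKc hne hPa hcurv (rel_symm h)
    (full_half hF2) (half_swap hKc hne (full_half hF1))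
  -- c3 = c2 by direction reversal
  have e32 : c3 = c2 := half_unique hKc hne hPa hcurv (rel_negr (rel_symm h))
    (full_half hF3) (full_half (full_negdir hF2))
  -- c4 = c3 by the swap argument
  have e43 : c4 = c3 := half_unique hKc hne hPa hcurv (rel_negl h)
    (full_half hF4) (half_swap hKc hne (full_half hF3))
  -- rewrite the second-derivative identity for the pair (-a, b)
  have hrw1 : (fun δ : ℝ => suppFn K (-a + δ • b))
      = fun δ : ℝ => (fun x : ℝ => suppFn K (-(a + x • b))) (-δ) := by
    funext δ
    show suppFn K (-a + δ • b) = suppFn K (-(a + (-δ) • b))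
    congr 1; rw [neg_smul]; abel
  have hrw2 : (fun δ : ℝ => suppFn K (-(-a + δ • b)))
      = fun δ : ℝ => (fun x : ℝ => suppFn K (a + x • b)) (-δ) := by
    funext δ
    show suppFn K (-(-a + δ • b)) = suppFn K (a + (-δ) • b)
    congr 1; rw [neg_smul]; abel
  have hLrw : iteratedDeriv 2 (fun δ : ℝ => suppFn K (-a + δ • b)) 0
      = iteratedDeriv 2 (fun x : ℝ => suppFn K (-(a + x • b))) 0 := by
    rw [hrw1]; exact iterDeriv2_neg (fun x : ℝ => suppFn K (-(a + x • b)))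
  have hRrw : iteratedDeriv 2 (fun δ : ℝ => suppFn K (-(-a + δ • b))) 0
      = iteratedDeriv 2 (fun x : ℝ => suppFn K (a + x • b)) 0 := by
    rw [hrw2]; exact iterDeriv2_neg (fun x : ℝ => suppFn K (a + x • b))
  rw [hLrw, hRrw] at hI4
  have hφ0 : 0 < iteratedDeriv 2 (fun x : ℝ => suppFn K (a + x • b)) 0 :=
    d2_pos hKc hne hPa hcurv h
  -- c4 * (c1 * φ'' = ψ'') and c4 * ψ'' = φ'' give c4 * c1 = 1
  have hc41 : c4 * c1 = 1 := by
    have h1 : c4 * (c1 * iteratedDeriv 2 (fun x : ℝ => suppFn K (a + x • b)) 0)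
        = iteratedDeriv 2 (fun x : ℝ => suppFn K (a + x • b)) 0 := by
      rw [hI1]; exact hI4
    have h2 : (c4 * c1 - 1) * iteratedDeriv 2 (fun x : ℝ => suppFn K (a + x • b)) 0 = 0 := by
      ring_nf
      ring_nf at h1
      linarith
    rcases mul_eq_zero.1 h2 with h3 | h3
    · linarith
    · exact absurd h3 (ne_of_gt hφ0)
  have hc1 : c1 = 1 := by
    have h4 : c1 * c1 = 1 := by rw [← hc41, e43, e32, e21]
    rcases mul_self_eq_one_iff.1 h4 with h5 | h5
    · exact h5
    · linarith
  obtain ⟨α, β, hr⟩ := hF1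
  refine ⟨α, β, fun δ => ?_⟩
  have := hr δ
  rw [hc1, one_mul] at this
  exact this

end One

-- ===== Part 7: the odd part of the support function is linear =====
section Lin

variable {d : ℕ} {K : Set (EuclideanSpace ℝ (Fin d))}

lemma exists_center (hd : 2 ≤ d) (hKc : IsCompact K) (hne : K.Nonempty)
    (hPa : AnalyticOnNhd ℝ (suppFn K) {(0 : EE d)}ᶜ)
    (hcurv : ∀ t w : EE d, t ≠ 0 → w ≠ 0 → (inner ℝ t w : ℝ) = 0 →
      0 < iteratedDeriv 2 (fun s : ℝ => suppFn K (t + s • w)) 0)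
    (hA : ∀ L : EE d ≃ₗ[ℝ] EE d, ∀ δ δ' : ℝ,
      iteratedDeriv 2 (fL d K L) δ * iteratedDeriv 2 (fLtilde d K L) δ' =
        iteratedDeriv 2 (fLtilde d K L) δ * iteratedDeriv 2 (fL d K L) δ') :
    ∃ v : EE d, ∀ t : EE d, suppFn K (-t) = suppFn K t - 2 * (inner ℝ t v : ℝ) := by
  set h : EE d → ℝ := fun t => suppFn K (-t) - suppFn K t with hdef
  have hscale : ∀ (s : ℝ) (t : EE d), h (s • t) = s * h t := by
    have hpos : ∀ (s : ℝ), 0 < s → ∀ t : EE d, h (s • t) = s * h t := by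
      intro s hs t
      simp only [hdef]
      rw [← smul_neg, suppFn_smul hKc hne hs, suppFn_smul hKc hne hs]
      ring
    intro s t
    rcases lt_trichotomy s 0 with hs | hs | hs
    · have h1 : s • t = (-s) • (-t) := by rw [neg_smul, smul_neg, neg_neg]
      rw [h1, hpos (-s) (by linarith) (-t)]
      have h2 : h (-t) = -h t := by simp only [hdef, neg_neg]; ring
      rw [h2]; ring
    · simp only [hs, hdef, zero_smul, neg_zero, sub_self, zero_mul]
    · exact hpos s hs t
  have hline : ∀ (a b : EE d), LinearIndependent ℝ ![a, b] → ∃ α β : ℝ, ∀ δ : ℝ,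
      h (a + δ • b) = α * δ + β := by
    intro a b hab
    obtain ⟨α, β, hr⟩ := line_affine hd hKc hne hPa hcurv hA hab
    refine ⟨α, β, fun δ => ?_⟩
    simp only [hdef]
    rw [hr δ]; ring
  have hadd : ∀ x y : EE d, h (x + y) = h x + h y := by
    intro x y
    by_cases hxy : LinearIndependent ℝ ![x, y - x]
    · obtain ⟨α, β, hr⟩ := hline x (y - x) hxy
      have h0 : h x = β := by
        have := hr 0; simpa using this
      have h1 : h y = α + β := by
        have := hr 1
        rw [show x + (1:ℝ) • (y - x) = y by rw [one_smul]; abel] at this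
        linarith
      have hhalf : h ((1/2 : ℝ) • (x + y)) = α * (1/2) + β := by
        have := hr (1/2)
        rw [show x + (1/2:ℝ) • (y - x) = (1/2 : ℝ) • (x + y) by module] at this
        exact this
      have h2 : h (x + y) = 2 * h ((1/2 : ℝ) • (x + y)) := by
        rw [← hscale]
        congr 1
        module
      rw [h2, hhalf, h0, h1]; ring
    · rw [rel_def, not_and_or] at hxy
      push_neg at hxy
      rcases hxy with hyx | ⟨s, hs⟩
      · have hxy2 : y = x := by
          have : y - x = 0 := hyx
          have := sub_eq_zero.1 this
          exact this
        rw [hxy2, show x + x = (2:ℝ) • x by module, hscale]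
        ring
      · -- x = s • (y - x), so everything lies on a line through 0
        have hx : x = s • (y - x) := hs.symm
        have hy : y = (s + 1) • (y - x) := by
          rw [add_smul, ← hx, one_smul]; abel
        have hxy3 : x + y = (s + (s+1)) • (y - x) := by
          rw [add_smul, ← hx, ← hy]
        have e1 := hscale s (y - x)
        rw [← hx] at e1
        have e2 := hscale (s + 1) (y - x)
        rw [← hy] at e2
        have e3 := hscale (s + (s + 1)) (y - x)
        rw [← hxy3] at e3
        rw [e3, e1, e2]
        ring
  -- h is linear; realize it as an inner ℝ product
  set B := EuclideanSpace.basisFun (Fin d) ℝ with hB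
  set u : EE d := ∑ i : Fin d, h (B i) • B i with hu
  have hrepr : ∀ t : EE d, h t = (inner ℝ t u : ℝ) := by
    intro t
    have hsum : ∑ i : Fin d, B.repr t i • B i = t := B.sum_repr t
    have h1 : h t = ∑ i : Fin d, B.repr t i * h (B i) := by
      conv_lhs => rw [← hsum]
      -- finite induction: use map_sum for the additive map defined by h
      have : ∀ (g : Fin d → EE d) (f : Fin d → ℝ) (s : Finset (Fin d)),
          h (∑ i ∈ s, f i • g i) = ∑ i ∈ s, f i * h (g i) := by
        intro g f s
        induction s using Finset.induction_on with
        | empty => simp [hdef]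
        | @insert a s hnotmem ih =>
            rw [Finset.sum_insert hnotmem, Finset.sum_insert hnotmem, hadd, hscale, ih]
      exact this B (fun i => B.repr t i) Finset.univ
    have h2 : (inner ℝ t u : ℝ) = ∑ i : Fin d, h (B i) * (inner ℝ t (B i) : ℝ) := by
      rw [hu, inner_sum]
      refine Finset.sum_congr rfl fun i _ => ?_
      rw [real_inner_smul_right]
    rw [h1, h2]
    refine Finset.sum_congr rfl fun i _ => ?_
    rw [B.repr_apply_apply, real_inner_comm]
    ring
  refine ⟨(-(1/2) : ℝ) • u, fun t => ?_⟩
  have := hrepr t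
  rw [real_inner_smul_right]
  simp only [hdef] at this
  linarith

end Lin

-- ===== Part 8: the symmetric direction =====
section SymmDir

variable {d : ℕ} {K : Set (EuclideanSpace ℝ (Fin d))}

lemma symm_implies_eq (hd : 2 ≤ d) (hKc : IsCompact K) (hconv : Convex ℝ K)
    (hne : K.Nonempty)
    (hPa : AnalyticOnNhd ℝ (suppFn K) {(0 : EE d)}ᶜ)
    (hsym : ∃ v : EE d, K = (fun x => (2:ℝ) • v - x) '' K)
    (L : EE d ≃ₗ[ℝ] EE d) (δ δ' : ℝ) :
    iteratedDeriv 2 (fL d K L) δ * iteratedDeriv 2 (fLtilde d K L) δ' =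
      iteratedDeriv 2 (fLtilde d K L) δ * iteratedDeriv 2 (fL d K L) δ' := by
  obtain ⟨v, hv⟩ := hsym
  have hrel := (symm_iff_suppFn hKc hconv hne v).1 hv
  have hrel01 : LinearIndependent ℝ ![L (pairVec d 1 0), L (pairVec d 0 1)] :=
    rel_map (rel_e0e1 hd) L
  have hLp : ∀ x : ℝ, L (pairVec d 1 x) = L (pairVec d 1 0) + x • L (pairVec d 0 1) :=
    fun x => by rw [pairVec_decomp, map_add, LinearEquiv.map_smul]
  have hfL : fL d K L = fun x : ℝ => suppFn K (L (pairVec d 1 0) + x • L (pairVec d 0 1)) :=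
    funext fun x => by simp only [fL]; rw [hLp]
  have hfan : AnalyticOnNhd ℝ (fL d K L) Set.univ := by
    rw [hfL]; exact curve_analytic hPa (rel_ne_zero hrel01)
  have hkey : fLtilde d K L = fun x : ℝ => fL d K L x +
      ((-(2 * (inner ℝ (L (pairVec d 0 1)) v : ℝ))) * x
        + (-(2 * (inner ℝ (L (pairVec d 1 0)) v : ℝ)))) := by
    funext x
    simp only [fLtilde, fL]
    rw [map_neg, hrel (L (pairVec d 1 x)), hLp x, inner_add_left, real_inner_smul_left]
    ring
  have hiter : ∀ x : ℝ, iteratedDeriv 2 (fLtilde d K L) x = iteratedDeriv 2 (fL d K L) x := by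
    intro x
    rw [hkey]
    exact iterDeriv2_add_affine hfan _ _ x
  rw [hiter δ, hiter δ']

end SymmDir


theorem second_derivative_ratio_or_symmetric
    (d : ℕ) (hd : 2 ≤ d) (C : StrictlyConvexAnalyticBody d)
    (h0 : (0 : EuclideanSpace ℝ (Fin d)) ∈ interior C.carrier) :
    Xor'
      (∃ L : EuclideanSpace ℝ (Fin d) ≃ₗ[ℝ] EuclideanSpace ℝ (Fin d), ∃ δ δ' : ℝ,
        iteratedDeriv 2 (fL d C.carrier L) δ * iteratedDeriv 2 (fLtilde d C.carrier L) δ' ≠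
        iteratedDeriv 2 (fLtilde d C.carrier L) δ * iteratedDeriv 2 (fL d C.carrier L) δ')
      (∃ v : EuclideanSpace ℝ (Fin d),
        C.carrier = (fun x => (2:ℝ) • v - x) '' C.carrier) := by
  classical
  have hKc := C.isCompact
  have hconv := C.convex
  have hne : C.carrier.Nonempty := ⟨0, interior_subset h0⟩
  have hPa := C.analyticSupport
  have hcurv := C.posCurvature
  by_cases hB : ∃ v : EuclideanSpace ℝ (Fin d),
      C.carrier = (fun x => (2:ℝ) • v - x) '' C.carrier
  · refine Or.inr ⟨hB, ?_⟩
    rintro ⟨L, δ, δ', hne'⟩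
    exact hne' (symm_implies_eq hd hKc hconv hne hPa hB L δ δ')
  · refine Or.inl ⟨?_, hB⟩
    by_contra hA
    push_neg at hA
    obtain ⟨v, hv⟩ := exists_center hd hKc hne hPa hcurv hA
    exact hB ⟨v, (symm_iff_suppFn hKc hconv hne v).2 hv⟩

end
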